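/- For the DAT kernel K_{l,m} = Σ_{n=0}^{N−1} X_{m,n}·exp(2πi·ln/N) with X satisfying the column normalization Σ_m |X_{m,n}|² = 1, the transform S_{j,m} = Σ_{l=0}^{N−1} s_l·K_{j−l,m} (indices mod N) satisfies the energy identity Σ_{m} Σ_{j=0}^{N−1} |S_{j,m}|² = N² · Σ_{l} |s_l|². -/

import Mathlib

open Finset

lemma dat_conj {N : ℕ} [NeZero N] (x : ZMod N) :
    (starRingEnd ℂ) (ZMod.stdAddChar x) = ZMod.stdAddChar (-x) := by
  rw [AddChar.map_neg_eq_inv, ← Complex.inv_eq_conj (by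
    rw [ZMod.stdAddChar_apply]; exact Circle.norm_coe _)]

lemma dat_nsq (z : ℂ) : ((‖z‖ ^ 2 : ℝ) : ℂ) = z * (starRingEnd ℂ) z := by
  rw [Complex.mul_conj, Complex.normSq_eq_norm_sq]

lemma dat_key {N : ℕ} [NeZero N] (a : ZMod N → ℂ) :
    ∑ j : ZMod N, ‖∑ n : ZMod N, a n * ZMod.stdAddChar (j * n)‖ ^ 2
      = N * ∑ n : ZMod N, ‖a n‖ ^ 2 := by
  classical
  have horth : ∀ d : ZMod N,
      ∑ j : ZMod N, ZMod.stdAddChar (j * d) = if d = 0 then (N : ℂ) else 0 :=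
    fun d => by simpa [ZMod.card] using AddChar.sum_mulShift d (ZMod.isPrimitive_stdAddChar N)
  apply Complex.ofReal_injective
  rw [Complex.ofReal_sum, Complex.ofReal_mul, Complex.ofReal_sum, Complex.ofReal_natCast]
  calc ∑ j : ZMod N, ((‖∑ n : ZMod N, a n * ZMod.stdAddChar (j * n)‖ ^ 2 : ℝ) : ℂ)
      = ∑ j : ZMod N, ∑ n : ZMod N, ∑ n' : ZMod N,
          (a n * (starRingEnd ℂ) (a n')) * ZMod.stdAddChar (j * (n - n')) := by
        refine sum_congr rfl fun j _ => ?_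
        rw [dat_nsq, map_sum, sum_mul_sum]
        refine sum_congr rfl fun n _ => sum_congr rfl fun n' _ => ?_
        rw [map_mul (starRingEnd ℂ), dat_conj]
        have h : ZMod.stdAddChar (j * (n - n')) =
            ZMod.stdAddChar (j * n) * ZMod.stdAddChar (-(j * n')) := by
          rw [← AddChar.map_add_eq_mul]; congr 1; ring
        rw [h]; ring
    _ = ∑ n : ZMod N, ∑ n' : ZMod N,
          (a n * (starRingEnd ℂ) (a n')) * ∑ j : ZMod N, ZMod.stdAddChar (j * (n - n')) := by
        rw [Finset.sum_comm]
        refine sum_congr rfl fun n _ => ?_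
        rw [Finset.sum_comm]
        exact sum_congr rfl fun n' _ => (Finset.mul_sum _ _ _).symm
    _ = ∑ n : ZMod N, (a n * (starRingEnd ℂ) (a n)) * N := by
        refine sum_congr rfl fun n _ => ?_
        simp_rw [horth, sub_eq_zero]
        rw [Finset.sum_eq_single n] <;> simp +contextual [eq_comm]
    _ = ↑N * ∑ n : ZMod N, ((‖a n‖ ^ 2 : ℝ) : ℂ) := by
        simp_rw [dat_nsq]
        rw [← Finset.sum_mul, mul_comm]

theorem dat_energy_identity {N M : ℕ} [NeZero N]
    (s : ZMod N → ℂ) (X : Fin M → ZMod N → ℂ)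
    (hX : ∀ n : ZMod N, ∑ m : Fin M, ‖X m n‖ ^ 2 = 1)
    (K : ZMod N → Fin M → ℂ)
    (hK : ∀ l m, K l m = ∑ n : ZMod N,
      X m n * Complex.exp (2 * Real.pi * Complex.I * (l.val * n.val) / N))
    (S : ZMod N → Fin M → ℂ)
    (hS : ∀ j m, S j m = ∑ l : ZMod N, s l * K (j - l) m) :
    ∑ m : Fin M, ∑ j : ZMod N, ‖S j m‖ ^ 2 = (N : ℝ) ^ 2 * ∑ l : ZMod N, ‖s l‖ ^ 2 := by
  classical
  have hexp : ∀ l n : ZMod N,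
      Complex.exp (2 * Real.pi * Complex.I * (l.val * n.val) / N)
        = ZMod.stdAddChar (l * n) := by
    intro l n
    have h : ((l.val * n.val : ℤ) : ZMod N) = l * n := by
      push_cast [ZMod.natCast_val, ZMod.cast_id]; ring
    rw [← h, ZMod.stdAddChar_coe]
    push_cast
    ring_nf
  set c : ZMod N → ℂ := fun n => ∑ l : ZMod N, s l * ZMod.stdAddChar (-(l * n)) with hc
  have hS' : ∀ j m, S j m = ∑ n : ZMod N, (X m n * c n) * ZMod.stdAddChar (j * n) := by
    intro j m
    have hsplit : ∀ l n : ZMod N, ZMod.stdAddChar ((j - l) * n)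
        = ZMod.stdAddChar (j * n) * ZMod.stdAddChar (-(l * n)) := by
      intro l n
      rw [← AddChar.map_add_eq_mul]; congr 1; ring
    rw [hS]
    simp_rw [hK, hexp, hsplit, Finset.mul_sum]
    rw [Finset.sum_comm]
    refine sum_congr rfl fun n _ => ?_
    show _ = X m n * (∑ l : ZMod N, s l * ZMod.stdAddChar (-(l * n))) * ZMod.stdAddChar (j * n)
    rw [Finset.mul_sum, Finset.sum_mul]
    exact sum_congr rfl fun l _ => by ring
  calc ∑ m : Fin M, ∑ j : ZMod N, ‖S j m‖ ^ 2
      = ∑ m : Fin M, (N : ℝ) * ∑ n : ZMod N, ‖X m n * c n‖ ^ 2 := by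
        refine sum_congr rfl fun m _ => ?_
        simp_rw [hS']
        exact dat_key _
    _ = (N : ℝ) * ∑ n : ZMod N, (∑ m : Fin M, ‖X m n‖ ^ 2) * ‖c n‖ ^ 2 := by
        rw [← Finset.mul_sum, Finset.sum_comm]
        congr 1
        refine sum_congr rfl fun n _ => ?_
        rw [Finset.sum_mul]
        exact sum_congr rfl fun m _ => by rw [norm_mul, mul_pow]
    _ = (N : ℝ) * ∑ n : ZMod N, ‖c n‖ ^ 2 := by
        congr 1
        exact sum_congr rfl fun n _ => by rw [hX n, one_mul]
    _ = (N : ℝ) * ∑ n : ZMod N, ‖∑ l : ZMod N, s l * ZMod.stdAddChar (n * l)‖ ^ 2 := by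
        congr 1
        refine Fintype.sum_equiv (Equiv.neg (ZMod N)) _ _ fun n => ?_
        simp only [hc, Equiv.neg_apply]
        congr 2
        refine sum_congr rfl fun l _ => ?_
        congr 2
        ring
    _ = (N : ℝ) * ((N : ℝ) * ∑ l : ZMod N, ‖s l‖ ^ 2) := by rw [dat_key]
    _ = (N : ℝ) ^ 2 * ∑ l : ZMod N, ‖s l‖ ^ 2 := by ring
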